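/- Let β > 0, I = [−β/2, β/2], and let ℙ be any probability measure on E^I (product σ-algebra) satisfying ∫ f₁(x(t₁))⋯fₙ(x(tₙ)) dℙ(x) = 𝒮_{f₁,…,fₙ}(t₁,…,tₙ) for all n ≥ 1, (t₁,…,tₙ) ∈ I^n_≤ and fᵢ ∈ C(E,ℂ). Suppose the family satisfies the symmetry condition: the complex conjugate of 𝒮_{f̄ₙ,…,f̄₁}(−tₙ,…,−t₁) equals 𝒮_{f₁,…,fₙ}(t₁,…,tₙ) for all n, all (t₁,…,tₙ) ∈ I^n_≤ and all fᵢ ∈ C(E,ℂ), where f̄ denotes the complex conjugate function. Then the pushforward of ℙ under the time-reversal map Φ : E^I → E^I, Φ(x)(t) := x(−t), equals ℙ. -/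

import Mathlib

open MeasureTheory ComplexConjugate

lemma aux_integrable {X : Type} [TopologicalSpace X] [CompactSpace X] [MeasurableSpace X]
    [OpensMeasurableSpace X] [SecondCountableTopology X]
    (g : C(X, ℂ)) (κ : Measure X) [IsFiniteMeasure κ] : Integrable g κ := by
  exact (BoundedContinuousFunction.mkOfCompact g).integrable κ

lemma aux_ext {ι : Type} [Fintype ι] {E : Type} [TopologicalSpace E] [CompactSpace E] [T2Space E]
    [SecondCountableTopology E] [MeasurableSpace E] [BorelSpace E]
    (μ ν : Measure (ι → E)) [IsProbabilityMeasure μ] [IsProbabilityMeasure ν]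
    (h : ∀ f : ι → C(E, ℂ), ∫ y, ∏ i, f i (y i) ∂μ = ∫ y, ∏ i, f i (y i) ∂ν) :
    μ = ν := by
  classical
  have hcont : ∀ (κ : Measure (ι → E)), IsProbabilityMeasure κ →
      Continuous (fun g : C(ι → E, ℂ) => ∫ y, g y ∂κ) := by
    intro κ hκ
    refine (LipschitzWith.of_dist_le_mul (K := 1) fun g₁ g₂ => ?_).continuous
    rw [dist_eq_norm, ← integral_sub (aux_integrable g₁ κ) (aux_integrable g₂ κ)]
    calc ‖∫ y, (g₁ y - g₂ y) ∂κ‖ ≤ dist g₁ g₂ * (κ Set.univ).toReal := by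
          apply norm_integral_le_of_norm_le_const
          filter_upwards with y
          rw [← dist_eq_norm]
          exact ContinuousMap.dist_apply_le_dist y
      _ = 1 * dist g₁ g₂ := by simp [measure_univ]
  have main : ∀ g : C(ι → E, ℂ), ∫ y, g y ∂μ = ∫ y, g y ∂ν := by
    let π : ι → C(ι → E, E) := fun i => ⟨fun y => y i, continuous_apply i⟩
    let G : Set C(ι → E, ℂ) := ⋃ i, Set.range (fun f0 : C(E, ℂ) => f0.comp (π i))
    have hGprodM : ∀ f : ι → C(E, ℂ),
        ∫ y, (∏ i, (f i).comp (π i)) y ∂μ = ∫ y, (∏ i, (f i).comp (π i)) y ∂ν := by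
      intro f
      have key : ∀ κ : Measure (ι → E),
          ∫ y, (∏ i, (f i).comp (π i)) y ∂κ = ∫ y, ∏ i, f i (y i) ∂κ := by
        intro κ; congr 1; funext y; simp [π]
      rw [key, key]; exact h f
    have hstarG : star G ⊆ G := by
      intro a ha
      rw [Set.mem_star] at ha
      simp only [G, Set.mem_iUnion, Set.mem_range] at ha ⊢
      obtain ⟨i, f0, hf0⟩ := ha
      refine ⟨i, star f0, ?_⟩
      have : a = star (star a) := (star_star a).symm
      rw [this, ← hf0]
      ext y; simp
    let M : Submodule ℂ C(ι → E, ℂ) :=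
      { carrier := {g | ∫ y, g y ∂μ = ∫ y, g y ∂ν}
        add_mem' := by
          intro a b ha hb
          simp only [Set.mem_setOf_eq, ContinuousMap.add_apply] at *
          rw [integral_add (aux_integrable a μ) (aux_integrable b μ),
            integral_add (aux_integrable a ν) (aux_integrable b ν), ha, hb]
        zero_mem' := by simp
        smul_mem' := by
          intro c a ha
          simp only [Set.mem_setOf_eq, ContinuousMap.smul_apply] at *
          rw [integral_smul, integral_smul, ha] }
    have hGM : (StarAlgebra.adjoin ℂ G : Set C(ι → E, ℂ)) ⊆
        {g | ∫ y, g y ∂μ = ∫ y, g y ∂ν} := by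
      intro g hg
      have h1 : g ∈ Algebra.adjoin ℂ (G ∪ star G) := by
        have := hg
        rwa [SetLike.mem_coe, ← StarSubalgebra.mem_toSubalgebra,
          StarAlgebra.adjoin_toSubalgebra] at this
      have h2 : g ∈ Algebra.adjoin ℂ G := by
        rwa [Set.union_eq_self_of_subset_right hstarG] at h1
      have h3 : g ∈ Submodule.span ℂ (Submonoid.closure G : Set C(ι → E, ℂ)) := by
        rw [← Algebra.adjoin_eq_span]; exact h2
      let N : Submonoid C(ι → E, ℂ) :=
        { carrier := {g | ∃ f : ι → C(E, ℂ), g = ∏ i, (f i).comp (π i)}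
          one_mem' := ⟨fun _ => 1, by ext y; simp⟩
          mul_mem' := by
            rintro a b ⟨fa, rfl⟩ ⟨fb, rfl⟩
            refine ⟨fun i => fa i * fb i, ?_⟩
            rw [← Finset.prod_mul_distrib]
            refine Finset.prod_congr rfl fun i _ => ?_
            ext y; simp }
      have hGN : G ⊆ N := by
        intro g hg
        simp only [G, Set.mem_iUnion, Set.mem_range] at hg
        obtain ⟨i, f0, rfl⟩ := hg
        refine ⟨fun j => if j = i then f0 else 1, ?_⟩
        ext y
        simp only [ContinuousMap.comp_apply, ContinuousMap.prod_apply]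
        have hterm : ∀ j : ι, ((if j = i then f0 else 1) : C(E,ℂ)) ((π j) y)
            = if j = i then f0 ((π i) y) else 1 := by
          intro j
          by_cases hj : j = i
          · subst hj; simp
          · simp [hj]
        rw [Finset.prod_congr rfl fun j _ => hterm j, Finset.prod_ite_eq']
        simp
      have h4 : g ∈ Submodule.span ℂ (N : Set C(ι → E, ℂ)) :=
        Submodule.span_mono (Submonoid.closure_le.mpr hGN) h3
      have h5 : Submodule.span ℂ (N : Set C(ι → E, ℂ)) ≤ M := by
        refine Submodule.span_le.mpr ?_
        rintro g' ⟨f, rfl⟩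
        exact hGprodM f
      exact h5 h4
    have hsep : (StarAlgebra.adjoin ℂ G).SeparatesPoints := by
      intro x y hxy
      obtain ⟨i, hi⟩ := Function.ne_iff.mp hxy
      obtain ⟨f0, hf00, hf01, -⟩ := exists_continuous_zero_one_of_isClosed
        (isClosed_singleton (x := x i)) (isClosed_singleton (x := y i))
        (Set.disjoint_singleton.mpr hi)
      let fc : C(E, ℂ) := ⟨fun e => (f0 e : ℂ), by continuity⟩
      refine ⟨_, ⟨fc.comp (π i), ?_, rfl⟩, ?_⟩
      · exact StarAlgebra.subset_adjoin ℂ G (Set.mem_iUnion.mpr ⟨i, ⟨fc, rfl⟩⟩)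
      · simp only [ContinuousMap.comp_apply]
        have h0 : f0 (x i) = 0 := hf00 rfl
        have h1 : f0 (y i) = 1 := hf01 rfl
        simp [fc, π, h0, h1]
    have hSW := ContinuousMap.starSubalgebra_topologicalClosure_eq_top_of_separatesPoints _ hsep
    intro g
    have hg : g ∈ (StarAlgebra.adjoin ℂ G).topologicalClosure := by rw [hSW]; trivial
    have hg' : g ∈ closure (StarAlgebra.adjoin ℂ G : Set C(ι → E, ℂ)) := hg
    exact closure_minimal hGM (isClosed_eq (hcont μ ‹_›) (hcont ν ‹_›)) hg'
  refine ext_of_forall_lintegral_eq_of_IsFiniteMeasure ?_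
  intro f
  rw [lintegral_coe_eq_integral _ (BoundedContinuousFunction.integrable_of_nnreal (μ := μ) f),
      lintegral_coe_eq_integral _ (BoundedContinuousFunction.integrable_of_nnreal (μ := ν) f)]
  congr 1
  have h2 := main ⟨fun y => ((f y : ℝ) : ℂ), Complex.continuous_ofReal.comp (NNReal.continuous_coe.comp f.continuous)⟩
  simp only [ContinuousMap.coe_mk] at h2
  have e1 : ∫ y, ((f y : ℝ) : ℂ) ∂μ = ((∫ y, (f y : ℝ) ∂μ : ℝ) : ℂ) := integral_ofReal
  have e2 : ∫ y, ((f y : ℝ) : ℂ) ∂ν = ((∫ y, (f y : ℝ) ∂ν : ℝ) : ℂ) := integral_ofReal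
  rw [e1, e2] at h2
  exact_mod_cast h2

open MeasureTheory ComplexConjugate


/-- **symmetry / time reversal.** Let `β > 0`, `I = [−β/2, β/2]`, and let
`ℙ` be a probability measure on `E^I` whose moments along nondecreasing tuples of times
are given by the moment family `𝒮`.  If the family satisfies the symmetry condition
`conj 𝒮_{f̄ₙ,…,f̄₁}(−tₙ,…,−t₁) = 𝒮_{f₁,…,fₙ}(t₁,…,tₙ)`, then the pushforward of `ℙ`
under the time-reversal map `Φ(x)(t) = x(−t)` equals `ℙ`. -/
theorem stmt_5
    (E : Type) [TopologicalSpace E] [CompactSpace E] [T2Space E]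
    [SecondCountableTopology E] [MeasurableSpace E] [BorelSpace E]
    (β : ℝ) (hβ : 0 < β)
    (I : Set ℝ) (hIdef : I = Set.Icc (-(β / 2)) (β / 2))
    (S : ∀ n : ℕ, (Fin n → C(E, ℂ)) → (Fin n → ℝ) → ℂ)
    (hScont : ∀ (n : ℕ) (f : Fin n → C(E, ℂ)),
      ContinuousOn (S n f) {t : Fin n → ℝ | (∀ i, t i ∈ I) ∧ Monotone t})
    (hSlin : ∀ (n : ℕ) (t : Fin n → ℝ), (∀ i, t i ∈ I) → Monotone t →
      ∀ (f : Fin n → C(E, ℂ)) (i : Fin n) (c : ℂ) (g h : C(E, ℂ)),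
        S n (Function.update f i (c • g + h)) t
          = c * S n (Function.update f i g) t + S n (Function.update f i h) t)
    (hSbdd : ∀ (n : ℕ) (t : Fin n → ℝ), (∀ i, t i ∈ I) → Monotone t →
      ∃ C > 0, ∀ f : Fin n → C(E, ℂ), ‖S n f t‖ ≤ C * ∏ i, ‖f i‖)
    (hScons : ∀ (n : ℕ) (t : Fin (n + 1) → ℝ), (∀ i, t i ∈ I) → Monotone t →
      ∀ (f : Fin (n + 1) → C(E, ℂ)) (i : Fin (n + 1)), f i = 1 →
        S (n + 1) f t = S n (f ∘ i.succAbove) (t ∘ i.succAbove))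
    (hSnorm : ∀ t : Fin 1 → ℝ, (∀ i, t i ∈ I) → S 1 (fun _ => 1) t = 1)
    (hSpos : ∀ (n : ℕ) (t : Fin n → ℝ), (∀ i, t i ∈ I) → Monotone t →
      ∀ f : Fin n → C(E, ℂ), (∀ i x, (f i x).im = 0 ∧ 0 ≤ (f i x).re) →
        0 ≤ (S n f t).re ∧ (S n f t).im = 0)
    (P : Measure (I → E)) (hP : IsProbabilityMeasure P)
    (hPmom : ∀ n : ℕ, 1 ≤ n → ∀ t : Fin n → ℝ, ∀ ht : ∀ i, t i ∈ I, Monotone t →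
      ∀ f : Fin n → C(E, ℂ),
        ∫ x, ∏ i, f i (x ⟨t i, ht i⟩) ∂P = S n f t)
    (hsym : ∀ (n : ℕ) (t : Fin n → ℝ), (∀ i, t i ∈ I) → Monotone t →
      ∀ f : Fin n → C(E, ℂ),
        conj (S n (fun i => star (f i.rev)) (fun i => -(t i.rev))) = S n f t) :
    ∀ Φ : (I → E) → (I → E),
      (∀ (x : I → E) (a b : I), (a : ℝ) = -(b : ℝ) → Φ x b = x a) →
      Measure.map Φ P = P := by
  intro Φ hΦ
  classical
  have hIsymm : ∀ r : ℝ, r ∈ I → -r ∈ I := by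
    intro r hr
    rw [hIdef] at hr ⊢
    simp only [Set.mem_Icc] at hr ⊢
    constructor <;> linarith [hr.1, hr.2]
  let σ : I → I := fun b => ⟨-(b : ℝ), hIsymm _ b.2⟩
  have hΦeq : ∀ x, Φ x = fun b => x (σ b) := fun x => funext fun b => hΦ x (σ b) b rfl
  have hΦmeas : Measurable Φ := by
    have hfe : Φ = fun x (b : I) => x (σ b) := funext hΦeq
    rw [hfe]
    exact measurable_pi_lambda _ fun b => measurable_pi_apply _
  have hmapP : IsProbabilityMeasure (Measure.map Φ P) :=
    Measure.isProbabilityMeasure_map hΦmeas.aemeasurable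
  have moment : ∀ (s : Finset I), 0 < s.card → ∀ (f : s → C(E, ℂ)),
      ∫ x, ∏ i : s, f i (x (σ i)) ∂P = ∫ x, ∏ i : s, f i (x i) ∂P := by
    intro s hpos f
    set n := s.card with hn
    have hn1 : 1 ≤ n := hpos
    let e := s.orderIsoOfFin (rfl : s.card = n)
    let t : Fin n → ℝ := fun k => ((e k : I) : ℝ)
    have htI : ∀ k, t k ∈ I := fun k => ((e k : I)).2
    have htmono : Monotone t := by
      intro a b hab
      have h1 := e.monotone hab
      exact_mod_cast h1
    let F : Fin n → C(E, ℂ) := fun k => f (e k)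
    have hR : ∫ x, ∏ i : s, f i (x i) ∂P = S n F t := by
      rw [← hPmom n hn1 t htI htmono F]
      congr 1
      funext x
      rw [← Equiv.prod_comp e.toEquiv (fun i : s => f i (x i))]
      rfl
    let t' : Fin n → ℝ := fun k => -(t k.rev)
    have ht'I : ∀ k, t' k ∈ I := fun k => hIsymm _ (htI _)
    have ht'mono : Monotone t' := by
      intro a b hab
      have h1 : t b.rev ≤ t a.rev := htmono (Fin.rev_le_rev.mpr hab)
      simp only [t']
      linarith
    let G : Fin n → C(E, ℂ) := fun k => F k.rev
    have hL : ∫ x, ∏ i : s, f i (x (σ i)) ∂P = S n G t' := by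
      rw [← hPmom n hn1 t' ht'I ht'mono G]
      congr 1
      funext x
      rw [← Equiv.prod_comp (Fin.revPerm.trans e.toEquiv) (fun i : s => f i (x (σ i)))]
      rfl
    have hsym' := hsym n t' ht'I ht'mono G
    have hGF : (fun i : Fin n => star (G i.rev)) = fun i => star (F i) := by
      funext i; simp [G, Fin.rev_rev]
    have htt : (fun i : Fin n => -(t' i.rev)) = t := by
      funext i; simp [t', Fin.rev_rev]
    rw [hGF, htt] at hsym'
    have hstar : S n (fun i => star (F i)) t = conj (S n F t) := by
      rw [← hPmom n hn1 t htI htmono F, ← hPmom n hn1 t htI htmono (fun i => star (F i)),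
        ← integral_conj]
      congr 1
      funext x
      rw [map_prod (starRingEnd ℂ)]
      exact Finset.prod_congr rfl fun i _ => rfl
    rw [hL, hR, ← hsym', hstar, Complex.conj_conj]
  refine ext_of_generate_finite _ generateFrom_measurableCylinders.symm
    isPiSystem_measurableCylinders ?_ (by simp)
  intro c hc
  obtain ⟨s, T, hT, rfl⟩ := (mem_measurableCylinders c).mp hc
  have hmeas_res : Measurable (fun x : I → E => fun i : s => x i) :=
    measurable_pi_lambda _ fun i => measurable_pi_apply _
  have hmeas_resσ : Measurable (fun x : I → E => fun i : s => x (σ i)) :=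
    measurable_pi_lambda _ fun i => measurable_pi_apply _
  have hPσ : IsProbabilityMeasure (Measure.map (fun x : I → E => fun i : s => x (σ i)) P) :=
    Measure.isProbabilityMeasure_map hmeas_resσ.aemeasurable
  have hPr : IsProbabilityMeasure (Measure.map (fun x : I → E => fun i : s => x i) P) :=
    Measure.isProbabilityMeasure_map hmeas_res.aemeasurable
  have key : Measure.map (fun x : I → E => fun i : s => x (σ i)) P
      = Measure.map (fun x : I → E => fun i : s => x i) P := by
    refine aux_ext _ _ ?_
    intro f
    have hcontf : Continuous (fun y : s → E => ∏ i : s, f i (y i)) := by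
      apply continuous_finset_prod
      intro i _
      exact (f i).continuous.comp (continuous_apply i)
    rw [integral_map hmeas_resσ.aemeasurable hcontf.aestronglyMeasurable,
      integral_map hmeas_res.aemeasurable hcontf.aestronglyMeasurable]
    rcases Nat.eq_zero_or_pos s.card with h0 | hpos
    · have hse : s = ∅ := Finset.card_eq_zero.mp h0
      subst hse
      simp
    · exact moment s hpos f
  rw [Measure.map_apply hΦmeas hT.cylinder]
  have hpre : Φ ⁻¹' cylinder s T = (fun x : I → E => fun i : s => x (σ i)) ⁻¹' T := by
    ext x
    simp only [Set.mem_preimage, mem_cylinder]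
    rw [hΦeq x]
    rfl
  rw [hpre, ← Measure.map_apply hmeas_resσ hT, key, Measure.map_apply hmeas_res hT]
  rfl
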